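/- Let H be a Hopf algebra with bijective antipode and A a right H-comodule algebra with B = A^{co H}. If for every generator h of H (as an algebra) the element 1 ⊗ h lies in the image of the canonical map χ: A ⊗_B A → A ⊗ H, then χ is surjective. -/
import Mathlib

open TensorProduct

variable (k H A : Type*) [Field k] [Ring H] [HopfAlgebra k H] [Ring A] [Algebra k A]

/-- The canonical map (at the level of `A ⊗[k] A`, of which the canonical map
`χ : A ⊗_B A → A ⊗ H` is the induced quotient map): `a' ⊗ a ↦ a' a_(0) ⊗ a_(1)`. -/
noncomputable def chi0 (δ : A →ₐ[k] A ⊗[k] H) : A ⊗[k] A →ₗ[k] A ⊗[k] H :=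
  (LinearMap.mul' k (A ⊗[k] H)) ∘ₗ
    (TensorProduct.map (Algebra.TensorProduct.includeLeft : A →ₐ[k] A ⊗[k] H).toLinearMap
      δ.toLinearMap)

lemma chi0_tmul (δ : A →ₐ[k] A ⊗[k] H) (a b : A) :
    chi0 k H A δ (a ⊗ₜ[k] b) = (a ⊗ₜ[k] (1 : H)) * δ b := by
  simp [chi0]

lemma chi0_aux1 (δ : A →ₐ[k] A ⊗[k] H) (a a' : A) (v : A ⊗[k] A) :
    ∃ w, chi0 k H A δ w = (a ⊗ₜ[k] (1 : H)) * chi0 k H A δ v * δ a' := by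
  induction v using TensorProduct.induction_on with
  | zero => exact ⟨0, by simp⟩
  | tmul c c' =>
    refine ⟨(a * c) ⊗ₜ[k] (c' * a'), ?_⟩
    have hsplit : (a * c) ⊗ₜ[k] (1:H) = (a ⊗ₜ[k] (1:H)) * (c ⊗ₜ[k] (1:H)) := by
      simp [Algebra.TensorProduct.tmul_mul_tmul]
    rw [chi0_tmul, chi0_tmul, map_mul, hsplit, mul_assoc, mul_assoc, mul_assoc]
  | add x y hx hy =>
    obtain ⟨w1, h1⟩ := hx
    obtain ⟨w2, h2⟩ := hy
    exact ⟨w1 + w2, by simp [h1, h2, mul_add, add_mul]⟩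

lemma chi0_aux2 (δ : A →ₐ[k] A ⊗[k] H) (k' : H) (v : A ⊗[k] A)
    (hv : chi0 k H A δ v = 1 ⊗ₜ[k] k') (u : A ⊗[k] A) :
    ∃ w, chi0 k H A δ w = ((1 : A) ⊗ₜ[k] k') * chi0 k H A δ u := by
  induction u using TensorProduct.induction_on with
  | zero => exact ⟨0, by simp⟩
  | tmul a a' =>
    obtain ⟨w, hw⟩ := chi0_aux1 k H A δ a a' v
    refine ⟨w, ?_⟩
    rw [hw, hv, chi0_tmul]
    rw [show ((1:A) ⊗ₜ[k] k') * ((a ⊗ₜ[k] (1:H)) * δ a')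
        = (((1:A) ⊗ₜ[k] k') * (a ⊗ₜ[k] (1:H))) * δ a' from (mul_assoc _ _ _).symm,
      show ((1:A) ⊗ₜ[k] k') * (a ⊗ₜ[k] (1:H)) = (a ⊗ₜ[k] (1:H)) * ((1:A) ⊗ₜ[k] k') by
        simp [Algebra.TensorProduct.tmul_mul_tmul], mul_assoc]
  | add x y hx hy =>
    obtain ⟨w1, h1⟩ := hx
    obtain ⟨w2, h2⟩ := hy
    exact ⟨w1 + w2, by simp [h1, h2, mul_add]⟩

/-- Let `H` be a Hopf algebra with bijective antipode and `A` a right `H`-comodule algebra.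
If for every generator `h` of `H` (as an algebra) the element `1 ⊗ h` lies in the image of
the canonical map `χ`, then `χ` is surjective. -/
theorem canonical_map_surjective_of_generators
    (hbij : Function.Bijective (HopfAlgebra.antipode (R := k) (A := H)))
    (δ : A →ₐ[k] A ⊗[k] H)
    (hcounit : ∀ a : A,
      (TensorProduct.rid k A)
        ((TensorProduct.map LinearMap.id (Coalgebra.counit (R := k) (A := H))) (δ a)) = a)
    (hcoassoc : ∀ a : A,
      (TensorProduct.assoc k A H H)
        ((TensorProduct.map δ.toLinearMap LinearMap.id) (δ a)) =
      (TensorProduct.map LinearMap.id (Coalgebra.comul (R := k) (A := H))) (δ a))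
    (S : Set H) (hgen : Algebra.adjoin k S = ⊤)
    (hhit : ∀ h ∈ S, ∃ u : A ⊗[k] A, chi0 k H A δ u = 1 ⊗ₜ[k] h) :
    Function.Surjective (chi0 k H A δ) := by
  -- the set of h with 1 ⊗ h in the range is a subalgebra
  set T : Subalgebra k H :=
    { carrier := {h | ∃ u : A ⊗[k] A, chi0 k H A δ u = 1 ⊗ₜ[k] h}
      mul_mem' := by
        rintro x y ⟨u, hu⟩ ⟨v, hv⟩
        obtain ⟨w, hw⟩ := chi0_aux2 k H A δ x u hu v
        exact ⟨w, by rw [hw, hv]; simp [Algebra.TensorProduct.tmul_mul_tmul]⟩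
      add_mem' := by
        rintro x y ⟨u, hu⟩ ⟨v, hv⟩
        exact ⟨u + v, by simp [hu, hv, TensorProduct.tmul_add]⟩
      algebraMap_mem' := by
        intro r
        refine ⟨r • ((1:A) ⊗ₜ[k] (1:A)), ?_⟩
        rw [map_smul, chi0_tmul]
        simp [Algebra.algebraMap_eq_smul_one, TensorProduct.tmul_smul] } with hT
  have hTtop : ∀ h : H, h ∈ T := by
    intro h
    have : Algebra.adjoin k S ≤ T := Algebra.adjoin_le fun s hs => hhit s hs
    exact this (hgen ▸ Algebra.mem_top)
  -- every 1 ⊗ h is in the range, so every a ⊗ h is, so everything is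
  intro x
  induction x using TensorProduct.induction_on with
  | zero => exact ⟨0, by simp⟩
  | tmul a h =>
    obtain ⟨u, hu⟩ := hTtop h
    obtain ⟨w, hw⟩ := chi0_aux1 k H A δ a 1 u
    refine ⟨w, ?_⟩
    rw [hw, hu]
    simp [Algebra.TensorProduct.tmul_mul_tmul]
  | add x y hx hy =>
    obtain ⟨w1, h1⟩ := hx
    obtain ⟨w2, h2⟩ := hy
    exact ⟨w1 + w2, by simp [h1, h2]⟩
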